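/- For the ℤ₂×ℤ₂ torus calculus with generic Θ₁, Θ₂ satisfying Θ₁R₁Θ₂ = Θ₂R₂Θ₁, the cohomology dimensions are dim H⁰ = 1, dim H¹ = 2, dim H² = 1. In particular: ker d on functions = constants; the space of closed 1-forms f e₁ + g e₂ (those with −Θ₂∂̄²f + f∂̄¹Θ₂ + Θ₁∂̄¹g − g∂̄²Θ₁ = 0) has dimension 5 for generic Θ; exact 1-forms have dimension 3; exact 2-forms have dimension 3 within the 4-dimensional Ω². -/

import Mathlib

/-- Auxiliary linear map `f ↦ (R_c f − f)·Θ` on `ℤ₂ × ℤ₂`. -/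
noncomputable def z22Shift (c : ZMod 2 × ZMod 2) (Θ : ZMod 2 × ZMod 2 → ℂ) :
    (ZMod 2 × ZMod 2 → ℂ) →ₗ[ℂ] (ZMod 2 × ZMod 2 → ℂ) where
  toFun f := fun x => (f (x + c) - f x) * Θ x
  map_add' f g := by funext x; simp only [Pi.add_apply]; ring
  map_smul' r f := by funext x; simp only [Pi.smul_apply, smul_eq_mul, RingHom.id_apply]; ring

/-- `d` on functions for the torus calculus on `ℤ₂ × ℤ₂`. -/
noncomputable def z22D0 (Θ₁ Θ₂ : ZMod 2 × ZMod 2 → ℂ) :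
    (ZMod 2 × ZMod 2 → ℂ) →ₗ[ℂ] (ZMod 2 × ZMod 2 → ℂ) × (ZMod 2 × ZMod 2 → ℂ) :=
  (z22Shift (1, 0) Θ₁).prod (z22Shift (0, 1) Θ₂)

/-- `d` on 1-forms `f e₁ + g e₂` for the torus calculus:
`d(f e₁ + g e₂) = (−Θ₂∂̄²f + f∂̄¹Θ₂ + Θ₁∂̄¹g − g∂̄²Θ₁) e₁∧e₂`. -/
noncomputable def z22D1 (Θ₁ Θ₂ : ZMod 2 × ZMod 2 → ℂ) :
    ((ZMod 2 × ZMod 2 → ℂ) × (ZMod 2 × ZMod 2 → ℂ)) →ₗ[ℂ] (ZMod 2 × ZMod 2 → ℂ) where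
  toFun p := fun x =>
    -Θ₂ x * (p.1 (x + (0, 1)) - p.1 x) + p.1 x * (Θ₂ (x + (1, 0)) - Θ₂ x)
      + Θ₁ x * (p.2 (x + (1, 0)) - p.2 x) - p.2 x * (Θ₁ (x + (0, 1)) - Θ₁ x)
  map_add' p q := by
    funext x
    simp only [Prod.fst_add, Prod.snd_add, Pi.add_apply]
    ring
  map_smul' r p := by
    funext x
    simp only [Prod.smul_fst, Prod.smul_snd, Pi.smul_apply, smul_eq_mul, RingHom.id_apply]
    ring

/-- The kernel of `d` on functions consists exactly of the constants. -/
lemma z22_ker_d0 (Θ₁ Θ₂ : ZMod 2 × ZMod 2 → ℂ) (h1 : ∀ x, Θ₁ x ≠ 0) (h2 : ∀ x, Θ₂ x ≠ 0) :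
    LinearMap.ker (z22D0 Θ₁ Θ₂) = Submodule.span ℂ {(fun _ => 1 : ZMod 2 × ZMod 2 → ℂ)} := by
  ext f
  rw [Submodule.mem_span_singleton, LinearMap.mem_ker]
  constructor
  · intro hf
    have hp := congrArg Prod.fst hf
    have hq := congrArg Prod.snd hf
    simp only [z22D0, z22Shift, LinearMap.prod_apply, LinearMap.coe_mk, AddHom.coe_mk,
      Function.prod] at hp hq
    have e1 : ∀ x, f (x + (1,0)) = f x := by
      intro x
      have := congrFun hp x
      rcases mul_eq_zero.mp this with h | h
      · exact sub_eq_zero.mp h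
      · exact absurd h (h1 x)
    have e2 : ∀ x, f (x + (0,1)) = f x := by
      intro x
      have := congrFun hq x
      rcases mul_eq_zero.mp this with h | h
      · exact sub_eq_zero.mp h
      · exact absurd h (h2 x)
    refine ⟨f 0, ?_⟩
    have k1 : f (1,0) = f 0 := by
      have := e1 0; rwa [show ((0:ZMod 2 × ZMod 2))+(1,0) = (1,0) by decide] at this
    have k2 : f (0,1) = f 0 := by
      have := e2 0; rwa [show ((0:ZMod 2 × ZMod 2))+(0,1) = (0,1) by decide] at this
    have k3 : f 1 = f 0 := by
      have := e1 (0,1); rw [show ((0,1):ZMod 2 × ZMod 2)+(1,0) = 1 by decide] at this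
      rw [this, k2]
    funext x
    fin_cases x <;> simp [k1, k2, k3]
    exacts [rfl, k2.symm, k1.symm, k3.symm]
  · rintro ⟨c, rfl⟩
    refine Prod.ext ?_ ?_ <;>
      simp only [z22D0, z22Shift, LinearMap.prod_apply, LinearMap.coe_mk, AddHom.coe_mk,
        Pi.prod] <;> funext x <;> simp

/-- `d² = 0` : the range of `d⁰` is contained in the kernel of `d¹`. -/
lemma z22_d1_d0 (Θ₁ Θ₂ : ZMod 2 × ZMod 2 → ℂ)
    (hc : ∀ x, Θ₁ x * Θ₂ (x + (1, 0)) = Θ₂ x * Θ₁ (x + (0, 1))) :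
    LinearMap.range (z22D0 Θ₁ Θ₂) ≤ LinearMap.ker (z22D1 Θ₁ Θ₂) := by
  rintro _ ⟨f, rfl⟩
  rw [LinearMap.mem_ker]
  funext x
  simp only [z22D0, z22D1, z22Shift, LinearMap.prod_apply, LinearMap.coe_mk, AddHom.coe_mk,
    Function.prod, Pi.zero_apply]
  rw [show x + (0,1) + (1,0) = x + (1,0) + (0,1) by abel]
  linear_combination (f (x + (1,0) + (0,1)) - f x) * hc x

/-- The rank of `d¹` is at least 3. -/
lemma z22_rank_d1_ge (Θ₁ Θ₂ : ZMod 2 × ZMod 2 → ℂ)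
    (h1 : ∀ x, Θ₁ x ≠ 0) (h2 : ∀ x, Θ₂ x ≠ 0) :
    3 ≤ Module.finrank ℂ (LinearMap.range (z22D1 Θ₁ Θ₂)) := by
  set v : Fin 3 → (ZMod 2 × ZMod 2 → ℂ) :=
    ![z22D1 Θ₁ Θ₂ (Pi.single (0,0) 1, 0), z22D1 Θ₁ Θ₂ (Pi.single (1,0) 1, 0),
      z22D1 Θ₁ Θ₂ (0, Pi.single (0,0) 1)] with hv
  have hli : LinearIndependent ℂ v := by
    rw [Fintype.linearIndependent_iff]
    intro c hc0
    have ev : ∀ pt, c 0 * v 0 pt + c 1 * v 1 pt + c 2 * v 2 pt = 0 := by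
      intro pt
      have := congrFun hc0 pt
      simpa [Fin.sum_univ_three] using this
    have e01 := ev (0,1)
    have e11 := ev (1,1)
    have e10 := ev (1,0)
    simp (config := { decide := true }) only [hv, z22D1, LinearMap.coe_mk, AddHom.coe_mk,
      Pi.single_apply, Pi.zero_apply, Matrix.cons_val_zero, Matrix.cons_val_one,
      Matrix.head_cons, Matrix.cons_val_two, Matrix.tail_cons, if_true, if_false] at e01 e11 e10
    have k0 : c 0 * Θ₂ (0,1) = 0 := by linear_combination -e01
    have hcc0 : c 0 = 0 := (mul_eq_zero.mp k0).resolve_right (h2 (0,1))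
    have k1 : c 1 * Θ₂ (1,1) = 0 := by linear_combination -e11
    have hcc1 : c 1 = 0 := (mul_eq_zero.mp k1).resolve_right (h2 (1,1))
    simp only [hcc0, hcc1, zero_mul, zero_add, mul_zero] at e10
    have k2 : c 2 * Θ₁ (1,0) = 0 := by linear_combination e10
    have hcc2 : c 2 = 0 := (mul_eq_zero.mp k2).resolve_right (h1 (1,0))
    intro i
    fin_cases i <;> assumption
  have hle : Submodule.span ℂ (Set.range v) ≤ LinearMap.range (z22D1 Θ₁ Θ₂) := by
    rw [Submodule.span_le]
    rintro _ ⟨i, rfl⟩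
    fin_cases i <;> exact LinearMap.mem_range_self _ _
  calc 3 = Module.finrank ℂ (Submodule.span ℂ (Set.range v)) := by
            rw [finrank_span_eq_card hli]; simp
    _ ≤ _ := Submodule.finrank_mono hle

/-- The "integration" functional annihilating the range of `d¹`. -/
noncomputable def z22Int (Θ₁ Θ₂ : ZMod 2 × ZMod 2 → ℂ) :
    (ZMod 2 × ZMod 2 → ℂ) →ₗ[ℂ] ℂ where
  toFun g := Θ₁ (1,0) * Θ₂ (0,1) * Θ₂ (1,1) * g (0,0)
    + Θ₁ (0,1) * Θ₂ (0,1) * Θ₂ (1,1) * g (1,0)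
    + Θ₁ (1,0) * Θ₂ (1,0) * Θ₂ (1,1) * g (0,1)
    + Θ₁ (0,1) * Θ₂ (0,0) * Θ₂ (0,1) * g (1,1)
  map_add' f g := by simp only [Pi.add_apply]; ring
  map_smul' r f := by simp only [Pi.smul_apply, smul_eq_mul, RingHom.id_apply]; ring

/-- The rank of `d¹` is at most 3. -/
lemma z22_rank_d1_le (Θ₁ Θ₂ : ZMod 2 × ZMod 2 → ℂ)
    (h1 : ∀ x, Θ₁ x ≠ 0) (h2 : ∀ x, Θ₂ x ≠ 0)
    (hc : ∀ x, Θ₁ x * Θ₂ (x + (1, 0)) = Θ₂ x * Θ₁ (x + (0, 1))) :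
    Module.finrank ℂ (LinearMap.range (z22D1 Θ₁ Θ₂)) ≤ 3 := by
  have hc0 := hc (0,0); have hc1 := hc (1,0); have hc2 := hc (0,1); have hc3 := hc (1,1)
  rw [show ((0,0):ZMod 2 × ZMod 2)+(1,0) = (1,0) by decide,
    show ((0,0):ZMod 2 × ZMod 2)+(0,1) = (0,1) by decide] at hc0
  rw [show ((1,0):ZMod 2 × ZMod 2)+(1,0) = (0,0) by decide,
    show ((1,0):ZMod 2 × ZMod 2)+(0,1) = (1,1) by decide] at hc1
  rw [show ((0,1):ZMod 2 × ZMod 2)+(1,0) = (1,1) by decide,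
    show ((0,1):ZMod 2 × ZMod 2)+(0,1) = (0,0) by decide] at hc2
  rw [show ((1,1):ZMod 2 × ZMod 2)+(1,0) = (0,1) by decide,
    show ((1,1):ZMod 2 × ZMod 2)+(0,1) = (1,0) by decide] at hc3
  have ha : Θ₁ (0,0) * Θ₁ (1,0) = Θ₁ (0,1) * Θ₁ (1,1) := by
    apply mul_left_cancel₀ (mul_ne_zero (h2 (0,0)) (h2 (1,0)))
    linear_combination Θ₁ (1,0) * Θ₂ (0,0) * hc0 + Θ₁ (0,1) * Θ₂ (0,0) * hc1
  have hb : Θ₂ (0,0) * Θ₂ (0,1) = Θ₂ (1,0) * Θ₂ (1,1) := by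
    apply mul_left_cancel₀ (mul_ne_zero (h1 (0,0)) (h1 (0,1)))
    linear_combination (-Θ₁ (0,1) * Θ₂ (1,1)) * hc0 + (-Θ₁ (0,1) * Θ₂ (0,0)) * hc2
  have hle : LinearMap.range (z22D1 Θ₁ Θ₂) ≤ LinearMap.ker (z22Int Θ₁ Θ₂) := by
    rintro _ ⟨⟨p, q⟩, rfl⟩
    rw [LinearMap.mem_ker]
    simp only [z22D1, z22Int, LinearMap.coe_mk, AddHom.coe_mk]
    rw [show ((0,0):ZMod 2 × ZMod 2)+(1,0) = (1,0) by decide,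
      show ((0,0):ZMod 2 × ZMod 2)+(0,1) = (0,1) by decide,
      show ((1,0):ZMod 2 × ZMod 2)+(1,0) = (0,0) by decide,
      show ((1,0):ZMod 2 × ZMod 2)+(0,1) = (1,1) by decide,
      show ((0,1):ZMod 2 × ZMod 2)+(1,0) = (1,1) by decide,
      show ((0,1):ZMod 2 × ZMod 2)+(0,1) = (0,0) by decide,
      show ((1,1):ZMod 2 × ZMod 2)+(1,0) = (0,1) by decide,
      show ((1,1):ZMod 2 × ZMod 2)+(0,1) = (1,0) by decide]
    linear_combination
      (-p (0,1) * Θ₁ (1,0) * Θ₂ (1,1) + p (1,1) * Θ₁ (0,1) * Θ₂ (0,1)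
        + q (0,1) * Θ₁ (0,1) * Θ₁ (1,1) - q (1,1) * Θ₁ (1,0) * Θ₁ (0,1)) * hb
      + (q (1,0) * Θ₂ (0,1) * Θ₂ (1,1) - q (0,1) * Θ₂ (1,0) * Θ₂ (1,1)) * ha
  have hker : Module.finrank ℂ (LinearMap.ker (z22Int Θ₁ Θ₂)) = 3 := by
    have hsurj : Function.Surjective (z22Int Θ₁ Θ₂) := by
      intro z
      refine ⟨(fun x => if x = ((0,0) : ZMod 2 × ZMod 2) then
        z * (Θ₁ (1,0) * Θ₂ (0,1) * Θ₂ (1,1))⁻¹ else 0), ?_⟩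
      simp (config := { decide := true }) only [z22Int, LinearMap.coe_mk, AddHom.coe_mk,
        if_true, if_false]
      field_simp [h1 (1,0), h2 (0,1), h2 1]
      simp [h2 (1,1)]
    have hrn := LinearMap.finrank_range_add_finrank_ker (z22Int Θ₁ Θ₂)
    rw [LinearMap.range_eq_top.mpr hsurj, finrank_top] at hrn
    simp [Module.finrank_fintype_fun_eq_card] at hrn
    omega
  calc Module.finrank ℂ (LinearMap.range (z22D1 Θ₁ Θ₂))
      ≤ Module.finrank ℂ (LinearMap.ker (z22Int Θ₁ Θ₂)) := Submodule.finrank_mono hle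
    _ = 3 := hker

/-- for the `ℤ₂×ℤ₂` torus calculus with generic nowhere-zero `Θ₁, Θ₂`
satisfying `Θ₁R₁Θ₂ = Θ₂R₂Θ₁` (genericity = nonvanishing of a fixed nonzero
polynomial, not identically zero on the constraint variety), the cohomology
dimensions are `dim H⁰ = 1`, `dim H¹ = 2`, `dim H² = 1`: closed functions are the
constants; closed 1-forms form a 5-dimensional space; exact 1-forms a 3-dimensional
space; exact 2-forms a 3-dimensional subspace of the 4-dimensional `Ω²`. -/
theorem torus_cohomology_generic :
    ∃ P : MvPolynomial ((ZMod 2 × ZMod 2) ⊕ (ZMod 2 × ZMod 2)) ℂ, P ≠ 0 ∧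
      (∃ Θ₁ Θ₂ : ZMod 2 × ZMod 2 → ℂ, (∀ x, Θ₁ x ≠ 0) ∧ (∀ x, Θ₂ x ≠ 0) ∧
        (∀ x, Θ₁ x * Θ₂ (x + (1, 0)) = Θ₂ x * Θ₁ (x + (0, 1))) ∧
        MvPolynomial.eval (Sum.elim Θ₁ Θ₂) P ≠ 0) ∧
      ∀ Θ₁ Θ₂ : ZMod 2 × ZMod 2 → ℂ, (∀ x, Θ₁ x ≠ 0) → (∀ x, Θ₂ x ≠ 0) →
        (∀ x, Θ₁ x * Θ₂ (x + (1, 0)) = Θ₂ x * Θ₁ (x + (0, 1))) →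
        MvPolynomial.eval (Sum.elim Θ₁ Θ₂) P ≠ 0 →
        Module.finrank ℂ (LinearMap.ker (z22D0 Θ₁ Θ₂)) = 1 ∧
        Module.finrank ℂ (LinearMap.range (z22D0 Θ₁ Θ₂)) = 3 ∧
        Module.finrank ℂ (LinearMap.ker (z22D1 Θ₁ Θ₂)) = 5 ∧
        LinearMap.range (z22D0 Θ₁ Θ₂) ≤ LinearMap.ker (z22D1 Θ₁ Θ₂) ∧
        Module.finrank ℂ (LinearMap.range (z22D1 Θ₁ Θ₂)) = 3 := by
  refine ⟨1, one_ne_zero, ⟨fun _ => 1, fun _ => 1, fun _ => one_ne_zero, fun _ => one_ne_zero,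
    fun _ => rfl, by simp⟩, ?_⟩
  intro Θ₁ Θ₂ h1 h2 hc _
  have hker0 : Module.finrank ℂ (LinearMap.ker (z22D0 Θ₁ Θ₂)) = 1 := by
    rw [z22_ker_d0 Θ₁ Θ₂ h1 h2]
    exact finrank_span_singleton (fun h => one_ne_zero (congrFun h (0,0)))
  have hdim : Module.finrank ℂ (ZMod 2 × ZMod 2 → ℂ) = 4 := by
    simp [Module.finrank_fintype_fun_eq_card]
  have hrange0 : Module.finrank ℂ (LinearMap.range (z22D0 Θ₁ Θ₂)) = 3 := by
    have hrn := LinearMap.finrank_range_add_finrank_ker (z22D0 Θ₁ Θ₂)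
    rw [hker0, hdim] at hrn
    omega
  have hrange1 : Module.finrank ℂ (LinearMap.range (z22D1 Θ₁ Θ₂)) = 3 :=
    le_antisymm (z22_rank_d1_le Θ₁ Θ₂ h1 h2 hc) (z22_rank_d1_ge Θ₁ Θ₂ h1 h2)
  have hker1 : Module.finrank ℂ (LinearMap.ker (z22D1 Θ₁ Θ₂)) = 5 := by
    have hrn := LinearMap.finrank_range_add_finrank_ker (z22D1 Θ₁ Θ₂)
    rw [hrange1] at hrn
    rw [Module.finrank_prod, hdim] at hrn
    omega
  exact ⟨hker0, hrange0, hker1, z22_d1_d0 Θ₁ Θ₂ hc, hrange1⟩
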